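/- Let X ⊆ ℕ² be standardization-invariant, i.e. for every finite set S ⊆ ℕ and every I, the number d_X(I;S) depends only on |S| (so d_X(I;S) = d_X(I;|S|)). Then for every n, every nonempty I ⊆ [n-1] with m = max(I) and I⁻ = I \ {m}, one has d_X(I;n) = C(n,m) · d_X(I⁻;m) · d_X(∅;n−m) − d_X(I⁻;n). -/

import Mathlib

open Classical in
/-- The `X`-descent set of a word `w = w₁⋯w_n` (stored 0-indexed as a list), as a subset of
`[n-1] = {1, …, n-1}`: position `i` is an `X`-descent iff `(w_i, w_{i+1}) ∈ X`. -/
noncomputable def XDes (X : Set (ℕ × ℕ)) (w : List ℕ) : Finset ℕ :=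
  (Finset.Icc 1 (w.length - 1)).filter (fun i => (w.getD (i - 1) 0, w.getD i 0) ∈ X)

/-- `dX X I S` is the number of permutations of the finite label set `S ⊆ ℕ` (written in
one-line notation as duplicate-free lists using exactly the labels of `S`) whose
`X`-descent set is exactly `I`. -/
noncomputable def dX (X : Set (ℕ × ℕ)) (I : Finset ℕ) (S : Finset ℕ) : ℕ :=
  Nat.card {w : List ℕ // w.Nodup ∧ w.toFinset = S ∧ XDes X w = I}

/-- `dXn X I n = dX X I [n]` where `[n] = {1, …, n}`. -/
noncomputable def dXn (X : Set (ℕ × ℕ)) (I : Finset ℕ) (n : ℕ) : ℕ :=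
  dX X I (Finset.Icc 1 n)

lemma mem_XDes {X : Set (ℕ × ℕ)} {w : List ℕ} {i : ℕ} :
    i ∈ XDes X w ↔ (1 ≤ i ∧ i ≤ w.length - 1) ∧ (w.getD (i - 1) 0, w.getD i 0) ∈ X := by
  simp [XDes, Finset.mem_filter, Finset.mem_Icc]

lemma xdes_append_left {X : Set (ℕ × ℕ)} (u v : List ℕ) {i : ℕ} (h1 : 1 ≤ i)
    (h2 : i ≤ u.length - 1) : i ∈ XDes X (u ++ v) ↔ i ∈ XDes X u := by
  rw [mem_XDes, mem_XDes, List.getD_append _ _ _ _ (by omega), List.getD_append _ _ _ _ (by omega)]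
  simp only [List.length_append]
  constructor <;> rintro ⟨-, hp⟩ <;> exact ⟨⟨by omega, by omega⟩, hp⟩

lemma xdes_append_right {X : Set (ℕ × ℕ)} (u v : List ℕ) {i : ℕ} (h1 : u.length + 1 ≤ i) :
    i ∈ XDes X (u ++ v) ↔ (i - u.length) ∈ XDes X v := by
  rw [mem_XDes, mem_XDes, List.getD_append_right _ _ _ _ (by omega),
    List.getD_append_right _ _ _ _ (by omega)]
  have he : i - 1 - u.length = i - u.length - 1 := by omega
  rw [he]
  simp only [List.length_append]
  constructor <;> rintro ⟨h, hp⟩ <;> exact ⟨by omega, hp⟩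

lemma sandwich {D I : Finset ℕ} {m : ℕ} (hm : m ∈ I) (h1 : I.erase m ⊆ D) (h2 : D ⊆ I) :
    D = I ∨ D = I.erase m := by
  by_cases hmD : m ∈ D
  · left
    refine Finset.Subset.antisymm h2 (fun x hx => ?_)
    by_cases hxm : x = m
    · exact hxm ▸ hmD
    · exact h1 (Finset.mem_erase.2 ⟨hxm, hx⟩)
  · right
    refine Finset.Subset.antisymm (fun x hx => ?_) h1
    exact Finset.mem_erase.2 ⟨fun h => hmD (h ▸ hx), h2 hx⟩

/-- The Finset of permutations of `S` with `X`-descent set `I`. -/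
noncomputable def Fc (X : Set (ℕ × ℕ)) (I S : Finset ℕ) : Finset (List ℕ) :=
  open Classical in ((S.sort (· ≤ ·)).permutations.toFinset).filter (fun w => XDes X w = I)

lemma perm_sort_iff {S : Finset ℕ} {w : List ℕ} :
    w.Perm (S.sort (· ≤ ·)) ↔ w.Nodup ∧ w.toFinset = S := by
  constructor
  · intro hp
    have h1 : w.Nodup := hp.nodup_iff.mpr (Finset.sort_nodup _ _)
    have h2 : (w : Multiset ℕ) = S.val := (Multiset.coe_eq_coe.2 hp).trans (Finset.sort_eq _ _)
    refine ⟨h1, ?_⟩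
    ext a
    rw [List.mem_toFinset, ← Multiset.mem_coe, h2, Finset.mem_val]
  · rintro ⟨h1, h2⟩
    apply Multiset.coe_eq_coe.mp
    rw [Finset.sort_eq]
    have hn : (↑w : Multiset ℕ).Nodup := Multiset.coe_nodup.mpr h1
    have := congrArg Finset.val h2
    simpa [List.toFinset, Multiset.toFinset, Multiset.dedup_eq_self.mpr hn] using this

lemma mem_Fc {X : Set (ℕ × ℕ)} {I S : Finset ℕ} {w : List ℕ} :
    w ∈ Fc X I S ↔ w.Nodup ∧ w.toFinset = S ∧ XDes X w = I := by
  simp only [Fc, Finset.mem_filter, List.mem_toFinset, List.mem_permutations, perm_sort_iff]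
  tauto

lemma dX_eq_card (X : Set (ℕ × ℕ)) (I S : Finset ℕ) : dX X I S = (Fc X I S).card := by
  rw [dX, ← Nat.card_eq_finsetCard]
  exact Nat.card_congr (Equiv.subtypeEquivRight (fun w => mem_Fc.symm))

lemma key (X : Set (ℕ × ℕ)) {n m : ℕ} {I : Finset ℕ} (hI : I ⊆ Finset.Icc 1 (n - 1))
    (hmI : m ∈ I) (hmax : ∀ j ∈ I, j ≤ m) :
    (Fc X I (Finset.Icc 1 n)).card + (Fc X (I.erase m) (Finset.Icc 1 n)).card
      = ∑ S ∈ Finset.powersetCard m (Finset.Icc 1 n),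
          (Fc X (I.erase m) S).card * (Fc X ∅ (Finset.Icc 1 n \ S)).card := by
  have hm1 : 1 ≤ m ∧ m ≤ n - 1 := Finset.mem_Icc.mp (hI hmI)
  have hmn : m < n := by omega
  have hcardIcc : (Finset.Icc 1 n).card = n := by rw [Nat.card_Icc]; omega
  -- LHS as card of a disjoint union
  have hdisj : Disjoint (Fc X I (Finset.Icc 1 n)) (Fc X (I.erase m) (Finset.Icc 1 n)) := by
    rw [Finset.disjoint_left]
    intro w hw1 hw2
    rw [mem_Fc] at hw1 hw2
    have : m ∈ I.erase m := by rw [← hw2.2.2, hw1.2.2]; exact hmI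
    exact (Finset.mem_erase.mp this).1 rfl
  rw [← Finset.card_union_of_disjoint hdisj]
  -- RHS as card of a sigma finset
  have hrhs : ∑ S ∈ Finset.powersetCard m (Finset.Icc 1 n),
      (Fc X (I.erase m) S).card * (Fc X ∅ (Finset.Icc 1 n \ S)).card
      = ((Finset.powersetCard m (Finset.Icc 1 n)).sigma
          (fun S => Fc X (I.erase m) S ×ˢ Fc X ∅ (Finset.Icc 1 n \ S))).card := by
    rw [Finset.card_sigma]
    exact Finset.sum_congr rfl (fun S _ => (Finset.card_product _ _).symm)
  rw [hrhs]
  refine Finset.card_bij' (fun w _ => ⟨(w.take m).toFinset, (w.take m, w.drop m)⟩)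
    (fun p _ => p.2.1 ++ p.2.2) ?_ ?_ ?_ ?_
  · -- forward map lands in the sigma finset
    intro w hw
    rw [Finset.mem_union, mem_Fc, mem_Fc] at hw
    have hnodup : w.Nodup := by rcases hw with h | h <;> exact h.1
    have hto : w.toFinset = Finset.Icc 1 n := by rcases hw with h | h <;> exact h.2.1
    have hXw : I.erase m ⊆ XDes X w ∧ XDes X w ⊆ I := by
      rcases hw with h | h
      · rw [h.2.2]; exact ⟨Finset.erase_subset _ _, le_refl I⟩
      · rw [h.2.2]; exact ⟨le_refl _, Finset.erase_subset _ _⟩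
    have hwlen : w.length = n := by
      rw [← List.toFinset_card_of_nodup hnodup, hto, hcardIcc]
    set u := w.take m with hu
    set v := w.drop m with hv
    have hw' : u ++ v = w := List.take_append_drop m w
    have hulen : u.length = m := by rw [hu, List.length_take]; omega
    have hunodup : u.Nodup := hnodup.sublist (List.take_sublist m w)
    have hvnodup : v.Nodup := hnodup.sublist (List.drop_sublist m w)
    have hdisjlist : u.Disjoint v := by
      have := hw' ▸ hnodup
      exact (List.nodup_append'.mp this).2.2
    have huto : u.toFinset ⊆ Finset.Icc 1 n := by
      intro x hx
      rw [← hto, List.mem_toFinset] at *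
      exact (List.take_sublist m w).mem hx
    have hucard : u.toFinset.card = m := by rw [List.toFinset_card_of_nodup hunodup, hulen]
    have hvto : v.toFinset = Finset.Icc 1 n \ u.toFinset := by
      have hU : u.toFinset ∪ v.toFinset = Finset.Icc 1 n := by
        rw [← List.toFinset_append, hw', hto]
      have hD : Disjoint u.toFinset v.toFinset :=
        List.disjoint_toFinset_iff_disjoint.mpr hdisjlist
      rw [← hU, Finset.union_sdiff_cancel_left hD]
    have hXu : XDes X u = I.erase m := by
      ext i
      constructor
      · intro hi
        have hi' := mem_XDes.mp hi
        have h1 : 1 ≤ i := hi'.1.1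
        have h2 : i ≤ m - 1 := by have := hi'.1.2; omega
        have : i ∈ XDes X w := by
          rw [← hw']
          exact (xdes_append_left u v h1 (by omega)).mpr hi
        exact Finset.mem_erase.2 ⟨by omega, hXw.2 this⟩
      · intro hi
        obtain ⟨hne, hiI⟩ := Finset.mem_erase.mp hi
        have h1 : 1 ≤ i ∧ i ≤ n - 1 := Finset.mem_Icc.mp (hI hiI)
        have h2 : i ≤ m - 1 := by have := hmax i hiI; omega
        have : i ∈ XDes X w := hXw.1 hi
        rw [← hw'] at this
        exact (xdes_append_left u v h1.1 (by omega)).mp this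
    have hXv : XDes X v = ∅ := by
      rw [Finset.eq_empty_iff_forall_notMem]
      intro i hi
      have h1 : 1 ≤ i := (mem_XDes.mp hi).1.1
      have : (m + i) ∈ XDes X w := by
        rw [← hw']
        refine (xdes_append_right u v (by omega)).mpr ?_
        have : m + i - u.length = i := by omega
        rw [this]
        exact hi
      have := hmax _ (hXw.2 this)
      omega
    rw [Finset.mem_sigma, Finset.mem_powersetCard, Finset.mem_product, mem_Fc, mem_Fc]
    exact ⟨⟨huto, hucard⟩, ⟨hunodup, rfl, hXu⟩, ⟨hvnodup, hvto, hXv⟩⟩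
  · -- backward map lands in the union
    rintro ⟨S, u, v⟩ hp
    rw [Finset.mem_sigma, Finset.mem_powersetCard, Finset.mem_product, mem_Fc, mem_Fc] at hp
    obtain ⟨⟨hS, hScard⟩, ⟨hun, huto, hXu⟩, ⟨hvn, hvto, hXv⟩⟩ := hp
    have hulen : u.length = m := by rw [← List.toFinset_card_of_nodup hun, huto, hScard]
    have hvlen : v.length = n - m := by
      rw [← List.toFinset_card_of_nodup hvn, hvto, Finset.card_sdiff_of_subset hS, hcardIcc, hScard]
    have hdisjF : Disjoint u.toFinset v.toFinset := by
      rw [huto, hvto]; exact Finset.disjoint_sdiff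
    have hnodup : (u ++ v).Nodup :=
      List.nodup_append'.mpr ⟨hun, hvn, List.disjoint_toFinset_iff_disjoint.mp hdisjF⟩
    have hto : (u ++ v).toFinset = Finset.Icc 1 n := by
      rw [List.toFinset_append, huto, hvto, Finset.union_sdiff_of_subset hS]
    have hsub1 : I.erase m ⊆ XDes X (u ++ v) := by
      intro i hi
      obtain ⟨hne, hiI⟩ := Finset.mem_erase.mp hi
      have h1 : 1 ≤ i ∧ i ≤ n - 1 := Finset.mem_Icc.mp (hI hiI)
      have h2 : i ≤ m - 1 := by have := hmax i hiI; omega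
      refine (xdes_append_left u v h1.1 (by omega)).mpr ?_
      rw [hXu]
      exact hi
    have hsub2 : XDes X (u ++ v) ⊆ I := by
      intro i hi
      have hi' := mem_XDes.mp hi
      have hlen : (u ++ v).length = n := by rw [List.length_append]; omega
      have h1 : 1 ≤ i := hi'.1.1
      have h2 : i ≤ n - 1 := by have := hi'.1.2; rw [hlen] at this; exact this
      rcases lt_trichotomy i m with h | h | h
      · have : i ∈ XDes X u := (xdes_append_left u v h1 (by omega)).mp hi
        rw [hXu] at this
        exact Finset.erase_subset _ _ this
      · exact h ▸ hmI
      · exfalso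
        have : i - u.length ∈ XDes X v := (xdes_append_right u v (by omega)).mp hi
        rw [hXv] at this
        exact Finset.notMem_empty _ this
    rw [Finset.mem_union, mem_Fc, mem_Fc]
    rcases sandwich hmI hsub1 hsub2 with h | h
    · exact Or.inl ⟨hnodup, hto, h⟩
    · exact Or.inr ⟨hnodup, hto, h⟩
  · intro w _
    exact List.take_append_drop m w
  · rintro ⟨S, u, v⟩ hp
    rw [Finset.mem_sigma, Finset.mem_powersetCard, Finset.mem_product, mem_Fc, mem_Fc] at hp
    obtain ⟨⟨hS, hScard⟩, ⟨hun, huto, _⟩, _⟩ := hp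
    have hulen : u.length = m := by rw [← List.toFinset_card_of_nodup hun, huto, hScard]
    have h1 : (u ++ v).take m = u := by rw [← hulen]; exact List.take_left
    have h2 : (u ++ v).drop m = v := by rw [← hulen]; exact List.drop_left
    simp only [h1, h2, huto]


/-- binomial recursion under standardization-invariance.
If `d_X(I;S)` depends only on `|S|` (i.e. `d_X(I;S) = d_X(I;|S|)` always), then for every `n`
and nonempty `I ⊆ [n-1]` with `m = max I`, `I⁻ = I \ {m}`:
`d_X(I;n) = C(n,m)·d_X(I⁻;m)·d_X(∅;n−m) − d_X(I⁻;n)`. -/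
theorem stmt1 (X : Set (ℕ × ℕ))
    (hstd : ∀ (S : Finset ℕ) (I : Finset ℕ), dX X I S = dXn X I S.card)
    (n : ℕ) (I : Finset ℕ) (hI : I ⊆ Finset.Icc 1 (n - 1)) (hne : I.Nonempty) :
    (dXn X I n : ℤ) =
      (n.choose (I.max' hne) : ℤ) * (dXn X (I.erase (I.max' hne)) (I.max' hne) : ℤ)
        * (dXn X ∅ (n - I.max' hne) : ℤ)
      - (dXn X (I.erase (I.max' hne)) n : ℤ) := by
  set m := I.max' hne with hm
  have hmI : m ∈ I := I.max'_mem hne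
  have hmax : ∀ j ∈ I, j ≤ m := fun j hj => I.le_max' j hj
  have hm1 : 1 ≤ m ∧ m ≤ n - 1 := Finset.mem_Icc.mp (hI hmI)
  have hcardIcc : (Finset.Icc 1 n).card = n := by rw [Nat.card_Icc]; omega
  have hkey := key X hI hmI hmax
  have hsum : ∑ S ∈ Finset.powersetCard m (Finset.Icc 1 n),
      (Fc X (I.erase m) S).card * (Fc X ∅ (Finset.Icc 1 n \ S)).card
      = n.choose m * (dXn X (I.erase m) m * dXn X ∅ (n - m)) := by
    rw [Finset.sum_congr rfl (fun S hS => ?_), Finset.sum_const, smul_eq_mul,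
      Finset.card_powersetCard, hcardIcc]
    obtain ⟨hS, hScard⟩ := Finset.mem_powersetCard.mp hS
    rw [← dX_eq_card, ← dX_eq_card, hstd, hstd, hScard, Finset.card_sdiff_of_subset hS, hcardIcc, hScard]
  have hmain : dXn X I n + dXn X (I.erase m) n
      = n.choose m * (dXn X (I.erase m) m * dXn X ∅ (n - m)) := by
    rw [dXn, dXn, dX_eq_card, dX_eq_card, hkey, hsum]
  have := congrArg (Nat.cast : ℕ → ℤ) hmain
  push_cast at this
  linarith
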